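/- Fix a positive integer k and give the set of k-tuples of positive integers the weight function W(n₁,…,n_k) = ∑_{i=1}^k 1/nᵢ ∈ ℚ. Then the ascending chain condition holds: every nonempty subset Z of (ℕ₊)^k contains an element of maximal weight, i.e. there exists α ∈ Z such that W(β) ≤ W(α) for all β ∈ Z. -/

import Mathlib

open Set Pointwise

lemma recip_range_isWF : (Set.range (fun n : ℕ+ => OrderDual.toDual ((1:ℚ)/(n:ℕ)))).IsWF := by
  rw [Set.IsWF, Set.wellFoundedOn_range]
  apply Subrelation.wf (r := (· < ·))
  · intro a b h
    simp only [Function.onFun, OrderDual.toDual_lt_toDual] at h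
    have hb : (0:ℚ) < ((b:ℕ):ℚ) := by exact_mod_cast b.pos
    have ha : (0:ℚ) < ((a:ℕ):ℚ) := by exact_mod_cast a.pos
    rw [div_lt_div_iff₀ hb ha, one_mul, one_mul] at h
    exact_mod_cast h
  · exact wellFounded_lt

lemma sum_recip_isPWO (k : ℕ) (s : Finset (Fin k)) :
    (Set.range (fun α : Fin k → ℕ+ =>
      OrderDual.toDual (∑ i ∈ s, (1:ℚ)/((α i : ℕ):ℚ)))).IsPWO := by
  classical
  induction s using Finset.induction with
  | empty =>
    simp only [Finset.sum_empty]
    exact (Set.subsingleton_of_subset_singleton (by rintro _ ⟨α, rfl⟩; rfl :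
      Set.range (fun _ : Fin k → ℕ+ => OrderDual.toDual (0:ℚ)) ⊆ {OrderDual.toDual (0:ℚ)})).isPWO
  | @insert a s ha ih =>
    have hsub : (Set.range (fun α : Fin k → ℕ+ =>
        OrderDual.toDual (∑ i ∈ insert a s, (1:ℚ)/((α i : ℕ):ℚ)))) ⊆
        (Set.range (fun n : ℕ+ => OrderDual.toDual ((1:ℚ)/(n:ℕ)))) +
        (Set.range (fun α : Fin k → ℕ+ =>
          OrderDual.toDual (∑ i ∈ s, (1:ℚ)/((α i : ℕ):ℚ)))) := by
      rintro _ ⟨α, rfl⟩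
      dsimp only
      rw [Finset.sum_insert ha]
      exact Set.add_mem_add ⟨α a, rfl⟩ ⟨α, rfl⟩
    exact ((recip_range_isWF.isPWO).add ih).mono hsub

theorem acc_for_reciprocal_weight
    (k : ℕ) (hk : 0 < k) (Z : Set (Fin k → ℕ+)) (hZ : Z.Nonempty) :
    ∃ α ∈ Z, ∀ β ∈ Z,
      (∑ i, (1 : ℚ) / ((β i : ℕ) : ℚ)) ≤ ∑ i, (1 : ℚ) / ((α i : ℕ) : ℚ) := by
  have hwf : WellFounded (fun a b : Fin k → ℕ+ =>
      (∑ i, (1:ℚ)/((b i : ℕ):ℚ)) < ∑ i, (1:ℚ)/((a i : ℕ):ℚ)) := by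
    have := (sum_recip_isPWO k Finset.univ).isWF
    rw [Set.IsWF, Set.wellFoundedOn_range] at this
    exact this
  obtain ⟨α, hαZ, hmin⟩ := hwf.has_min Z hZ
  exact ⟨α, hαZ, fun β hβ => not_lt.mp (hmin β hβ)⟩
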